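/- Let P, I, g be positive integers such that P divides I, I divides P + 1 - g (as integers), and I divides 2g - 2. Then P divides g - 1, I divides 2P, and if I = 2P then (g-1)/P is odd. -/
import Mathlib


/-- Lichtenbaum's conditions on period `P`, index `I` and genus `g`. -/
theorem lichtenbaum_conditions (P I g : ℤ) (hP : 0 < P) (hI : 0 < I) (hg : 0 < g)
    (hPI : P ∣ I) (h1 : I ∣ P + 1 - g) (h2 : I ∣ 2 * g - 2) :
    P ∣ g - 1 ∧ I ∣ 2 * P ∧ (I = 2 * P → Odd ((g - 1) / P)) := by
  have hP1g : P ∣ P + 1 - g := hPI.trans h1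
  have hPg : P ∣ g - 1 := by
    have h : P - (P + 1 - g) = g - 1 := by ring
    rw [← h]; exact dvd_sub dvd_rfl hP1g
  have hI2P : I ∣ 2 * P := by
    have h : 2 * (P + 1 - g) + (2 * g - 2) = 2 * P := by ring
    rw [← h]; exact dvd_add (h1.mul_left 2) h2
  refine ⟨hPg, hI2P, ?_⟩
  intro hIeq
  obtain ⟨k, hk⟩ := hPg
  have hdiv : (g - 1) / P = k := by
    rw [hk]; exact Int.mul_ediv_cancel_left k hP.ne'
  rw [hdiv]
  have h2k : 2 ∣ 1 - k := by
    have hPk : P * (1 - k) = P + 1 - g := by linear_combination hk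
    rw [hIeq] at h1
    obtain ⟨m, hm⟩ := h1
    rw [← hPk] at hm
    have : 1 - k = 2 * m :=
      mul_left_cancel₀ hP.ne' (by linarith : P * (1 - k) = P * (2 * m))
    exact ⟨m, this⟩
  obtain ⟨m, hm⟩ := h2k
  exact ⟨-m, by linarith⟩
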